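/- Let α be a type, let a : α, and let i be a natural number with 2 ≤ i. Let P : Fin i → List α be pairwise distinct lists such that for every j : Fin i there is a list t_j with P j = a :: t_j and a ∉ t_j. Let A : Fin i → ℕ satisfy 1 ≤ A j for every j, and let w = (List.ofFn (fun j => (List.replicate (A j) (P j)).flatten)).flatten, i.e., w is the concatenation P 0 repeated A 0 times, followed by P 1 repeated A 1 times, and so on. Then there do not exist a list u : List α and a natural number m with 2 ≤ m such that w = (List.replicate m u).flatten. -/

import Mathlib

namespace GPB

variable {α : Type*}

/-- Glue a list of a-free chunks into a word, prefixing each by `a`. -/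
def g (a : α) (L : List (List α)) : List α := (L.map (a :: ·)).flatten

@[simp] lemma g_nil (a : α) : g a ([] : List (List α)) = [] := rfl

@[simp] lemma g_cons (a : α) (s : List α) (L : List (List α)) :
    g a (s :: L) = a :: (s ++ g a L) := by simp [g]

lemma g_append (a : α) (L1 L2 : List (List α)) :
    g a (L1 ++ L2) = g a L1 ++ g a L2 := by simp [g]

lemma g_injOn (a : α) : ∀ (L1 L2 : List (List α)),
    (∀ s ∈ L1, a ∉ s) → (∀ s ∈ L2, a ∉ s) → g a L1 = g a L2 → L1 = L2 := by
  intro L1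
  induction L1 with
  | nil =>
    intro L2 _ _ h
    cases L2 with
    | nil => rfl
    | cons s L2 => simp at h
  | cons t1 L1 ih =>
    intro L2 h1 h2 h
    cases L2 with
    | nil => simp at h
    | cons t2 L2 =>
      simp only [g_cons, List.cons.injEq, true_and] at h
      have ht1 : a ∉ t1 := h1 t1 (by simp)
      have ht2 : a ∉ t2 := h2 t2 (by simp)
      have heq : t1 = t2 := by
        rcases List.append_eq_append_iff.mp h with ⟨d, hd1, hd2⟩ | ⟨d, hd1, hd2⟩
        · cases d with
          | nil => simpa using hd1.symm
          | cons x d =>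
            exfalso
            cases L1 with
            | nil => simp [g] at hd2
            | cons s L1' =>
              rw [g_cons] at hd2
              have : a = x := by simpa using congrArg List.head? hd2
              exact ht2 (by rw [hd1, this]; simp)
        · cases d with
          | nil => simpa using hd1
          | cons x d =>
            exfalso
            cases L2 with
            | nil => simp [g] at hd2
            | cons s L2' =>
              rw [g_cons] at hd2
              have : a = x := by simpa using congrArg List.head? hd2
              exact ht1 (by rw [hd1, this]; simp)
      subst heq
      have : g a L1 = g a L2 := by
        have := h
        simpa using this
      rw [ih L2 (fun s hs => h1 s (by simp [hs])) (fun s hs => h2 s (by simp [hs])) this]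

lemma first_occ {a : α} : ∀ {s : List α}, a ∈ s →
    ∃ t s', s = t ++ a :: s' ∧ a ∉ t := by
  intro s
  induction s with
  | nil => intro h; simp at h
  | cons x s ih =>
    intro h
    by_cases hx : x = a
    · exact ⟨[], s, by simp [hx], by simp⟩
    · have : a ∈ s := by
        rcases List.mem_cons.mp h with h | h
        · exact absurd h.symm hx
        · exact h
      obtain ⟨t, s', h1, h2⟩ := ih this
      refine ⟨x :: t, s', by simp [h1], ?_⟩
      intro hmem
      rcases List.mem_cons.mp hmem with h | h
      · exact hx h.symm
      · exact h2 h

/-- Every word starting with `a` decomposes into a-free chunks. -/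
lemma decompose (a : α) : ∀ (n : ℕ) (u : List α), u.length ≤ n →
    ∀ s, u = a :: s → ∃ R, (∀ x ∈ R, a ∉ x) ∧ g a R = u := by
  intro n
  induction n with
  | zero => intro u hu s hs; subst hs; simp at hu
  | succ n ih =>
    intro u hu s hs
    subst hs
    by_cases ha : a ∈ s
    · obtain ⟨t, s', h1, h2⟩ := first_occ ha
      have hlen : (a :: s').length ≤ n := by
        have := hu
        simp [h1] at this ⊢
        omega
      obtain ⟨R', hR1, hR2⟩ := ih (a :: s') hlen s' rfl
      refine ⟨t :: R', ?_, ?_⟩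
      · intro x hx
        rcases List.mem_cons.mp hx with h | h
        · subst h; exact h2
        · exact hR1 x h
      · rw [g_cons, hR2, h1]
    · exact ⟨[s], by simpa using ha, by simp⟩

end GPB

theorem grouped_prime_blocks_not_repetition
    {α : Type*} (a : α) (i : ℕ) (hi : 2 ≤ i)
    (P : Fin i → List α) (hPdist : Function.Injective P)
    (hPprime : ∀ j : Fin i, ∃ t : List α, P j = a :: t ∧ a ∉ t)
    (A : Fin i → ℕ) (hA : ∀ j : Fin i, 1 ≤ A j) :
    ¬ ∃ (u : List α) (m : ℕ), 2 ≤ m ∧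
        (List.ofFn (fun j : Fin i => (List.replicate (A j) (P j)).flatten)).flatten =
          (List.replicate m u).flatten := by
  obtain ⟨n, rfl⟩ : ∃ n, i = n + 2 := ⟨i - 2, by omega⟩
  rintro ⟨u, m, hm, hw⟩
  obtain ⟨m', rfl⟩ : ∃ m', m = m' + 1 := ⟨m - 1, by omega⟩
  have hm' : 1 ≤ m' := by omega
  set t : Fin (n+2) → List α := fun j => (hPprime j).choose with ht_def
  have ht : ∀ j, P j = a :: t j ∧ a ∉ t j := fun j => (hPprime j).choose_spec
  set Q : List (List α) :=
    (List.ofFn (fun j : Fin (n+2) => List.replicate (A j) (t j))).flatten with hQ_def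
  -- w = g a Q
  have hgQ : GPB.g a Q = (List.ofFn (fun j : Fin (n+2) =>
      (List.replicate (A j) (P j)).flatten)).flatten := by
    rw [hQ_def, GPB.g, List.map_flatten, List.map_ofFn, List.flatten_flatten, List.map_ofFn]
    apply congrArg List.flatten
    apply congrArg List.ofFn
    funext j
    simp [Function.comp, List.map_replicate, (ht j).1]
  -- entries of Q are a-free
  have hQfree : ∀ s ∈ Q, a ∉ s := by
    intro s hs
    rw [hQ_def] at hs
    obtain ⟨l, hl, hsl⟩ := List.mem_flatten.mp hs
    obtain ⟨j, hj⟩ := List.mem_ofFn.mp hl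
    rw [← hj] at hsl
    rw [(List.eq_of_mem_replicate hsl)]
    exact (ht j).2
  -- Q decomposes: first group then rest
  have hQsplit : Q = List.replicate (A 0) (t 0) ++
      (List.ofFn (fun j : Fin (n+1) => List.replicate (A j.succ) (t j.succ))).flatten := by
    rw [hQ_def, List.ofFn_succ]
    simp
  -- Q nonempty
  have hQne : Q ≠ [] := by
    rw [hQsplit]
    have : A 0 ≠ 0 := by have := hA 0; omega
    cases h : A 0 with
    | zero => exact absurd h this
    | succ k => simp [h, List.replicate_succ]
  -- u starts with a
  obtain ⟨s0, Q', hQcons⟩ := List.exists_cons_of_ne_nil hQne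
  have hwhead : GPB.g a Q = a :: (s0 ++ GPB.g a Q') := by rw [hQcons]; simp
  have hune : ∃ su, u = a :: su := by
    cases u with
    | nil =>
      exfalso
      have : GPB.g a Q = [] := by
        rw [hgQ, hw]; simp
      rw [hwhead] at this; simp at this
    | cons x su =>
      refine ⟨su, ?_⟩
      have h1 : GPB.g a Q = (x :: su) ++ (List.replicate m' (x :: su)).flatten := by
        rw [hgQ, hw, List.replicate_succ, List.flatten_cons]
      rw [hwhead] at h1
      have : a = x := by simpa using congrArg List.head? h1
      rw [this]
  obtain ⟨su, hsu⟩ := hune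
  obtain ⟨R, hRfree, hRg⟩ := GPB.decompose a u.length u le_rfl su hsu
  -- Q = flatten (replicate m R)
  have hgrep : GPB.g a ((List.replicate (m'+1) R).flatten) = (List.replicate (m'+1) u).flatten := by
    rw [GPB.g, List.map_flatten, List.map_replicate, List.flatten_flatten, List.map_replicate]
    rw [← GPB.g, hRg]
  have hrepfree : ∀ s ∈ (List.replicate (m'+1) R).flatten, a ∉ s := by
    intro s hs
    obtain ⟨l, hl, hsl⟩ := List.mem_flatten.mp hs
    rw [List.eq_of_mem_replicate hl] at hsl
    exact hRfree s hsl
  have hQR : Q = (List.replicate (m'+1) R).flatten := by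
    apply GPB.g_injOn a _ _ hQfree hrepfree
    rw [hgQ, hw, hgrep]
  set p := R.length with hp_def
  set N := Q.length with hN_def
  have hNmp : N = (m'+1) * p := by
    rw [hN_def, hQR]
    simp [List.length_flatten, List.map_replicate, List.sum_replicate, smul_eq_mul, hp_def]
  have hp1 : 1 ≤ p := by
    by_contra h
    have : p = 0 := by omega
    have : R = [] := List.length_eq_zero_iff.mp this
    rw [this] at hQR
    simp at hQR
    exact hQne hQR
  -- periodicity
  have hper : ∀ k (h : k + p < N), Q[k + p]'h = Q[k]'(by omega) := by
    intro k h
    have hd1 : Q = R ++ (List.replicate m' R).flatten := by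
      rw [hQR, List.replicate_succ, List.flatten_cons]
    have hd2 : Q = (List.replicate m' R).flatten ++ R := by
      rw [hQR, List.replicate_succ', List.flatten_append]
      simp
    have hq'len : ((List.replicate m' R).flatten).length = m' * p := by
      simp [List.length_flatten, List.map_replicate, List.sum_replicate, smul_eq_mul, hp_def]
    have hmul : (m' + 1) * p = m' * p + p := Nat.succ_mul _ _
    have hk : k < m' * p := by omega
    calc Q[k + p]'h = ((R ++ (List.replicate m' R).flatten))[k + p]'(by rw [← hd1]; exact h) := by
          congr 1
      _ = ((List.replicate m' R).flatten)[k + p - p]'(by rw [hq'len]; omega) := by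
          apply List.getElem_append_right
          omega
      _ = ((List.replicate m' R).flatten)[k]'(by rw [hq'len]; omega) := by congr 1; omega
      _ = ((List.replicate m' R).flatten ++ R)[k]'(by rw [← hd2]; omega) := by
          rw [List.getElem_append_left (by rw [hq'len]; omega)]
      _ = Q[k]'(by omega) := by congr 1; exact hd2.symm
  -- first group values
  have hfront : ∀ k (h1 : k < A 0) (h2 : k < N), Q[k]'h2 = t 0 := by
    intro k h1 h2
    have : Q[k]'h2 = (List.replicate (A 0) (t 0) ++
        (List.ofFn (fun j : Fin (n+1) => List.replicate (A j.succ) (t j.succ))).flatten)[k]'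
        (by rw [← hQsplit]; exact h2) := by congr 1
    rw [this, List.getElem_append_left (by simpa using h1), List.getElem_replicate]
  -- rest values differ from t 0
  have hrest : ∀ s ∈ (List.ofFn (fun j : Fin (n+1) =>
      List.replicate (A j.succ) (t j.succ))).flatten, s ≠ t 0 := by
    intro s hs
    obtain ⟨l, hl, hsl⟩ := List.mem_flatten.mp hs
    obtain ⟨j, hj⟩ := List.mem_ofFn.mp hl
    rw [← hj] at hsl
    rw [List.eq_of_mem_replicate hsl]
    intro heq
    have hP : P j.succ = P 0 := by rw [(ht _).1, (ht _).1, heq]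
    exact Fin.succ_ne_zero j (hPdist hP)
  have hN2p : p < N := by
    have h1 : (m' + 1) * p = m' * p + p := Nat.succ_mul _ _
    have h2 : p ≤ m' * p := le_mul_of_one_le_left (by omega) hm'
    omega
  -- p < A 0
  have hpA : p < A 0 := by
    by_contra h
    push_neg at h
    have h0p : 0 + p < N := by omega
    have hQp : Q[p]'(by omega) = t 0 := by
      have := hper 0 h0p
      simp only [Nat.zero_add] at this
      rw [this]
      exact hfront 0 (by have := hA 0; omega) (by omega)
    have : Q[p]'(by omega) ≠ t 0 := by
      have hsplit2 : Q[p]'(by omega) = ((List.ofFn (fun j : Fin (n+1) =>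
          List.replicate (A j.succ) (t j.succ))).flatten)[p - A 0]'(by
            have hlen := congrArg List.length hQsplit
            simp only [List.length_append, List.length_replicate] at hlen
            omega) := by
        have : Q[p]'(by omega) = (List.replicate (A 0) (t 0) ++
            (List.ofFn (fun j : Fin (n+1) => List.replicate (A j.succ) (t j.succ))).flatten)[p]'
            (by rw [← hQsplit]; omega) := by congr 1
        rw [this, List.getElem_append_right (by simpa using h)]
        simp
      rw [hsplit2]
      exact hrest _ (List.getElem_mem _)
    exact this hQp
  -- all entries equal t 0
  have hall : ∀ k (h : k < N), Q[k]'h = t 0 := by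
    intro k
    induction k using Nat.strong_induction_on with
    | _ k ih =>
      intro h
      by_cases hk : k < A 0
      · exact hfront k hk h
      · push_neg at hk
        have hkp : k - p + p = k := by omega
        have hper' : Q[k]'h = Q[k - p]'(by omega) := by
          have := hper (k - p) (by omega)
          rw [← this]
          congr 1
          omega
        rw [hper']
        exact ih (k - p) (by omega) (by omega)
  -- but t 1 ∈ Q and t 1 ≠ t 0
  have ht1mem : t 1 ∈ Q := by
    rw [hQ_def]
    apply List.mem_flatten.mpr
    refine ⟨List.replicate (A 1) (t 1), ?_, ?_⟩
    · exact List.mem_ofFn.mpr ⟨1, rfl⟩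
    · exact List.mem_replicate.mpr ⟨by have := hA 1; omega, rfl⟩
  obtain ⟨k, hk, hQk⟩ := List.mem_iff_getElem.mp ht1mem
  have : t 1 = t 0 := by rw [← hQk, hall k hk]
  have hP10 : P 1 = P 0 := by rw [(ht _).1, (ht _).1, this]
  have : (1 : Fin (n+2)) = 0 := hPdist hP10
  simp [Fin.ext_iff] at this
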